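/- If the upper-bound rank satisfies r↑(u) ≤ c · R↓_k, where R↓_k is the k-th smallest lower-bound rank, then r(q,u,P) ≤ c · r(q,u_k,P) where u_k is the user with the k-th smallest true rank. In other words, u is a valid member of a c-approximate reverse k-ranks answer. -/

import Mathlib

open Finset

/-- Standard inner (dot) product on ℝ^d. -/
def dot {d : ℕ} (u v : Fin d → ℝ) : ℝ := ∑ i, u i * v i

/-- Rank of q for user u among item set P. -/
noncomputable def rnk {d : ℕ} (q u : Fin d → ℝ) (P : Finset (Fin d → ℝ)) : ℕ :=
  1 + (P.filter (fun p => dot u q < dot u p)).card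

/-- k-th smallest element of a multiset of reals (1-indexed). -/
noncomputable def kth (s : Multiset ℝ) (k : ℕ) : ℝ :=
  ((s.sort (· ≤ ·)).getD (k - 1) 0)

/-- count of elements > x is antitone under pointwise-≤ relation. -/
lemma countP_gt_le_of_rel {s t : Multiset ℝ} (h : Multiset.Rel (· ≤ ·) s t) (x : ℝ) :
    s.countP (fun a => x < a) ≤ t.countP (fun a => x < a) := by
  induction h with
  | zero => simp
  | @cons a b s t hab hst ih =>
      rw [Multiset.countP_cons, Multiset.countP_cons]
      have : (if x < a then 1 else 0) ≤ (if x < b then 1 else 0) := by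
        split_ifs with h1 h2
        · exact le_refl 1
        · exact absurd (lt_of_lt_of_le h1 hab) h2
        · exact Nat.zero_le 1
        · exact le_refl 0
      exact Nat.add_le_add ih this

lemma sorted_getD_le {l : List ℝ} (hl : l.Pairwise (· ≤ ·)) {k : ℕ} (hk1 : 1 ≤ k)
    (hk2 : k ≤ l.length) {x : ℝ}
    (hc : l.countP (fun a => decide (x < a)) ≤ l.length - k) :
    l.getD (k - 1) 0 ≤ x := by
  by_contra hx
  push_neg at hx
  have hkl : k - 1 < l.length := by omega
  rw [List.getD_eq_getElem _ _ hkl] at hx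
  -- all elements of drop (k-1) are > x
  have hdrop : ∀ a ∈ l.drop (k - 1), x < a := by
    intro a ha
    obtain ⟨i, hi, rfl⟩ := List.getElem_of_mem ha
    have hlen : k - 1 + i < l.length := by
      rw [List.length_drop] at hi; omega
    have heq : (l.drop (k-1))[i]'hi = l[k-1+i]'hlen := List.getElem_drop
    rw [heq]
    have : l[k-1] ≤ l[k - 1 + i] := by
      have := hl.rel_get_of_le (a := ⟨k-1, hkl⟩) (b := ⟨k-1+i, hlen⟩)
        (Nat.le_add_right _ _)
      simpa using this
    exact lt_of_lt_of_le hx this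
  have h1 : (l.drop (k-1)).countP (fun a => decide (x < a)) = (l.drop (k-1)).length := by
    rw [List.countP_eq_length]
    intro a ha; simpa using hdrop a ha
  have h2 : l.countP (fun a => decide (x < a)) =
      (l.take (k-1)).countP (fun a => decide (x < a))
        + (l.drop (k-1)).countP (fun a => decide (x < a)) := by
    rw [← List.countP_append, List.take_append_drop]
  rw [List.length_drop] at h1
  have h3 : (l.take (k-1)).countP (fun a => decide (x < a)) ≤ k - 1 := by
    calc _ ≤ (l.take (k-1)).length := List.countP_le_length
    _ ≤ k - 1 := by rw [List.length_take]; omega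
  omega

lemma sorted_countP_gt_getD {l : List ℝ} (hl : l.Pairwise (· ≤ ·)) {k : ℕ} (hk1 : 1 ≤ k)
    (hk2 : k ≤ l.length) :
    l.countP (fun a => decide (l.getD (k-1) 0 < a)) ≤ l.length - k := by
  set x := l.getD (k-1) 0 with hxdef
  have hkl : k - 1 < l.length := by omega
  have htake : ∀ a ∈ l.take k, ¬ (x < a) := by
    intro a ha
    obtain ⟨i, hi, rfl⟩ := List.getElem_of_mem ha
    have hil : i < l.length := by
      rw [List.length_take] at hi; omega
    have heq : (l.take k)[i]'hi = l[i]'hil := List.getElem_take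
    rw [heq]
    have hik : i ≤ k - 1 := by
      rw [List.length_take] at hi; omega
    have : l[i] ≤ l[k-1] := by
      have := hl.rel_get_of_le (a := ⟨i, hil⟩) (b := ⟨k-1, hkl⟩) hik
      simpa using this
    rw [hxdef, List.getD_eq_getElem _ _ hkl]
    exact not_lt.2 this
  have h1 : (l.take k).countP (fun a => decide (x < a)) = 0 := by
    rw [List.countP_eq_zero]
    intro a ha; simpa using htake a ha
  have h2 : l.countP (fun a => decide (x < a)) =
      (l.take k).countP (fun a => decide (x < a))
        + (l.drop k).countP (fun a => decide (x < a)) := by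
    rw [← List.countP_append, List.take_append_drop]
  have h3 : (l.drop k).countP (fun a => decide (x < a)) ≤ l.length - k := by
    calc _ ≤ (l.drop k).length := List.countP_le_length
    _ = l.length - k := List.length_drop
  omega

/-- k-th order statistic is monotone under Multiset.Rel (≤). -/
lemma kth_le_of_rel {s t : Multiset ℝ} (h : Multiset.Rel (· ≤ ·) s t)
    {k : ℕ} (hk1 : 1 ≤ k) (hk2 : k ≤ Multiset.card s) :
    kth s k ≤ kth t k := by
  have hcard : Multiset.card s = Multiset.card t := Multiset.card_eq_card_of_rel h
  set ls := s.sort (· ≤ ·)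
  set lt := t.sort (· ≤ ·)
  have hls : ls.length = Multiset.card s := Multiset.length_sort _
  have hlt : lt.length = Multiset.card t := Multiset.length_sort _
  have hsortS : ls.Pairwise (· ≤ ·) := Multiset.pairwise_sort _ _
  have hsortT : lt.Pairwise (· ≤ ·) := Multiset.pairwise_sort _ _
  set x := lt.getD (k-1) 0 with hx
  have hcount_t : lt.countP (fun a => decide (x < a)) ≤ lt.length - k :=
    sorted_countP_gt_getD hsortT hk1 (by omega)
  have hms : s.countP (fun a => x < a) ≤ t.countP (fun a => x < a) :=
    countP_gt_le_of_rel h x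
  have hcs : s.countP (fun a => x < a) = ls.countP (fun a => decide (x < a)) := by
    conv_lhs => rw [← Multiset.sort_eq s (· ≤ ·)]
    rw [Multiset.coe_countP]
  have hct : t.countP (fun a => x < a) = lt.countP (fun a => decide (x < a)) := by
    conv_lhs => rw [← Multiset.sort_eq t (· ≤ ·)]
    rw [Multiset.coe_countP]
  have : ls.countP (fun a => decide (x < a)) ≤ ls.length - k := by
    rw [← hcs]
    calc s.countP _ ≤ t.countP _ := hms
    _ = lt.countP _ := hct
    _ ≤ lt.length - k := hcount_t
    _ = ls.length - k := by rw [hls, hlt, hcard]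
  exact sorted_getD_le hsortS hk1 (by omega) this

lemma rel_map_of_forall {α : Type*} (s : Multiset α) (f g : α → ℝ)
    (h : ∀ a ∈ s, f a ≤ g a) :
    Multiset.Rel (· ≤ ·) (s.map f) (s.map g) := by
  induction s using Multiset.induction_on with
  | empty => simp
  | cons a s ih =>
      simp only [Multiset.map_cons]
      exact Multiset.Rel.cons (h a (Multiset.mem_cons_self _ _))
        (ih fun b hb => h b (Multiset.mem_cons_of_mem hb))

theorem stmt1 {d : ℕ} (U P : Finset (Fin d → ℝ)) (q : Fin d → ℝ)
    (k : ℕ) (hk1 : 1 ≤ k) (hk2 : k ≤ U.card)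
    (c : ℝ) (hc : 1 ≤ c)
    (rlo rhi : (Fin d → ℝ) → ℝ)
    (hb : ∀ u ∈ U, rlo u ≤ (rnk q u P : ℝ) ∧ (rnk q u P : ℝ) ≤ rhi u)
    (uk : Fin d → ℝ) (huk : uk ∈ U)
    (hukk : (rnk q uk P : ℝ) = kth (U.val.map (fun u => (rnk q u P : ℝ))) k)
    (u : Fin d → ℝ) (hu : u ∈ U)
    (hcond : rhi u ≤ c * kth (U.val.map rlo) k) :
    (rnk q u P : ℝ) ≤ c * (rnk q uk P : ℝ) := by
  have hrel : Multiset.Rel (· ≤ ·) (U.val.map rlo)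
      (U.val.map (fun u => (rnk q u P : ℝ))) :=
    rel_map_of_forall U.val _ _ (fun a ha => (hb a ha).1)
  have hkth : kth (U.val.map rlo) k ≤ kth (U.val.map (fun u => (rnk q u P : ℝ))) k :=
    kth_le_of_rel hrel hk1 (by simpa using hk2)
  calc (rnk q u P : ℝ) ≤ rhi u := (hb u hu).2
    _ ≤ c * kth (U.val.map rlo) k := hcond
    _ ≤ c * kth (U.val.map (fun u => (rnk q u P : ℝ))) k :=
        mul_le_mul_of_nonneg_left hkth (le_trans zero_le_one hc)
    _ = c * (rnk q uk P : ℝ) := by rw [hukk]
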